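/- arXiv:0704.2123 — 2 statements merged into one kernel-verified Lean document; each statement's English description precedes it below -/
import Mathlib

section
/- Let σ = −1, n ∈ ℕ, 0 < c < n, w > 0, and μ₀ ∈ ℝ with |μ₀| < w. Then the function φ(ξ) = √(2(n²−c²)/(3n²−c²)) · √(w² − μ₀²) / (√(w + μ₀) cosh(√(w² − μ₀²) ξ) − i √(w − μ₀) sinh(√(w² − μ₀²) ξ)) solves the ODE i φ'(ξ) = w φ̄(ξ) − μ₀ φ(ξ) − ((3n² − c²)/(n² − c²)) |φ(ξ)|² φ(ξ), and φ(ξ) → 0 exponentially as |ξ| → ∞. -/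
set_option maxHeartbeats 2000000
open Complex


private lemma frac_aux (Ag d e dp k w m γ2 : ℂ) (hd : d ≠ 0) (he : e ≠ 0)
    (main : -Complex.I * dp * e = w * d^2 - m * (d*e) - γ2)
    (hk : k * Ag^2 = γ2) :
    Complex.I * (-Ag * dp / d^2) = w * (Ag/e) - m * (Ag/d) - k * (Ag/d * (Ag/e)) * (Ag/d) := by
  field_simp
  linear_combination Ag * main + Ag * hk

theorem stmt_8 (n : ℕ) (c : ℝ) (hc1 : 0 < c) (hc2 : c < n)
    (w μ₀ : ℝ) (hw : 0 < w) (hμ : |μ₀| < w)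
    (γ : ℝ) (hγ : γ = Real.sqrt (w^2 - μ₀^2))
    (φ : ℝ → ℂ)
    (hφ : ∀ ξ : ℝ, φ ξ =
      (Real.sqrt (2 * ((n : ℝ)^2 - c^2) / (3 * (n : ℝ)^2 - c^2)) : ℂ) * (γ : ℂ) /
        ((Real.sqrt (w + μ₀) * Real.cosh (γ * ξ) : ℝ) -
          I * (Real.sqrt (w - μ₀) * Real.sinh (γ * ξ) : ℝ))) :
    (∀ ξ : ℝ, I * deriv φ ξ =
      (w : ℂ) * (starRingEnd ℂ) (φ ξ) - (μ₀ : ℂ) * φ ξ -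
        (((3 * (n : ℝ)^2 - c^2) / ((n : ℝ)^2 - c^2) : ℝ) : ℂ) *
          ((‖φ ξ‖^2 : ℝ) : ℂ) * φ ξ) ∧
    (∃ C : ℝ, 0 < C ∧ ∀ ξ : ℝ, ‖φ ξ‖ ≤ C * Real.exp (-γ * |ξ|)) := by
  obtain ⟨hμl, hμr⟩ := abs_lt.mp hμ
  have hwp : (0:ℝ) < w + μ₀ := by linarith
  have hwm : (0:ℝ) < w - μ₀ := by linarith
  have hnc : (0:ℝ) < (n:ℝ)^2 - c^2 := by nlinarith
  have hnc3 : (0:ℝ) < 3*(n:ℝ)^2 - c^2 := by nlinarith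
  set sa := Real.sqrt (w + μ₀) with hsa
  set sb := Real.sqrt (w - μ₀) with hsb
  set A := Real.sqrt (2 * ((n : ℝ)^2 - c^2) / (3 * (n : ℝ)^2 - c^2)) with hA
  have hsa2 : sa^2 = w + μ₀ := Real.sq_sqrt hwp.le
  have hsb2 : sb^2 = w - μ₀ := Real.sq_sqrt hwm.le
  have hsap : 0 < sa := Real.sqrt_pos.mpr hwp
  have hsbp : 0 < sb := Real.sqrt_pos.mpr hwm
  have hγ2 : 0 < w^2 - μ₀^2 := by nlinarith
  have hγp : 0 < γ := hγ ▸ Real.sqrt_pos.mpr hγ2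
  have hab : sa * sb = γ := by
    rw [hγ, hsa, hsb, ← Real.sqrt_mul hwp.le]
    ring_nf
  have hAp : 0 < A := Real.sqrt_pos.mpr (by positivity)
  have hA2 : ((3*(n:ℝ)^2 - c^2)/((n:ℝ)^2 - c^2)) * A^2 = 2 := by
    rw [hA, Real.sq_sqrt (by positivity)]
    field_simp
  -- denominator and its nonvanishing
  set D : ℝ → ℂ := fun ξ => ((sa * Real.cosh (γ * ξ) : ℝ) : ℂ) -
      I * ((sb * Real.sinh (γ * ξ) : ℝ) : ℂ) with hD
  have hDre : ∀ ξ, (D ξ).re = sa * Real.cosh (γ * ξ) := by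
    intro ξ
    simp only [hD, Complex.sub_re, Complex.ofReal_re, Complex.mul_re, Complex.I_re,
      Complex.I_im, Complex.ofReal_im]
    ring
  have hDne : ∀ ξ, D ξ ≠ 0 := by
    intro ξ h
    have := hDre ξ
    rw [h] at this
    have : sa * Real.cosh (γ * ξ) = 0 := by simpa using this.symm
    nlinarith [Real.cosh_pos (γ * ξ)]
  have hDconj : ∀ ξ, (starRingEnd ℂ) (D ξ) = ((sa * Real.cosh (γ * ξ) : ℝ) : ℂ) +
      I * ((sb * Real.sinh (γ * ξ) : ℝ) : ℂ) := by
    intro ξ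
    simp only [hD, map_sub, map_mul, Complex.conj_ofReal, Complex.conj_I]
    ring
  have hDcne : ∀ ξ, (starRingEnd ℂ) (D ξ) ≠ 0 := by
    intro ξ h; exact hDne ξ (by simpa using congrArg (starRingEnd ℂ) h)
  have hφD : ∀ ξ, φ ξ = ((A : ℂ) * (γ : ℂ)) / D ξ := by
    intro ξ; rw [hφ ξ]
  -- derivative of D
  have hDderiv : ∀ ξ, HasDerivAt D
      (((sa * (γ * Real.sinh (γ * ξ)) : ℝ) : ℂ) -
        I * ((sb * (γ * Real.cosh (γ * ξ)) : ℝ) : ℂ)) ξ := by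
    intro ξ
    have hlin : HasDerivAt (fun ξ : ℝ => γ * ξ) γ ξ := by
      simpa using (hasDerivAt_id ξ).const_mul γ
    have hch : HasDerivAt (fun ξ : ℝ => Real.cosh (γ * ξ)) (Real.sinh (γ * ξ) * γ) ξ :=
      (Real.hasDerivAt_cosh (γ * ξ)).comp ξ hlin
    have hsh : HasDerivAt (fun ξ : ℝ => Real.sinh (γ * ξ)) (Real.cosh (γ * ξ) * γ) ξ :=
      (Real.hasDerivAt_sinh (γ * ξ)).comp ξ hlin
    have h1 := ((hch.const_mul sa).ofReal_comp)
    have h2 := ((hsh.const_mul sb).ofReal_comp).const_mul I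
    have := h1.sub h2
    refine this.congr_deriv ?_
    push_cast; ring
  have hderiv : ∀ ξ, deriv φ ξ = -((A : ℂ) * γ) *
      (((sa * (γ * Real.sinh (γ * ξ)) : ℝ) : ℂ) -
        I * ((sb * (γ * Real.cosh (γ * ξ)) : ℝ) : ℂ)) / (D ξ)^2 := by
    intro ξ
    have hfd : HasDerivAt φ (-((A : ℂ) * γ) *
        (((sa * (γ * Real.sinh (γ * ξ)) : ℝ) : ℂ) -
          I * ((sb * (γ * Real.cosh (γ * ξ)) : ℝ) : ℂ)) / (D ξ)^2) ξ := by
      have hfun : φ = fun ξ => ((A : ℂ) * (γ : ℂ)) / D ξ := funext hφD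
      rw [hfun]
      have := (hasDerivAt_const ξ ((A : ℂ) * (γ : ℂ))).div (hDderiv ξ) (hDne ξ)
      refine this.congr_deriv ?_
      ring
    exact hfd.deriv
  constructor
  · intro ξ
    have hnorm : ((‖φ ξ‖^2 : ℝ) : ℂ) = φ ξ * (starRingEnd ℂ) (φ ξ) := by
      rw [Complex.mul_conj]
      norm_cast
      rw [Complex.normSq_eq_norm_sq]
    have hconjφ : (starRingEnd ℂ) (φ ξ) = ((A : ℂ) * γ) /
        (((sa * Real.cosh (γ * ξ) : ℝ) : ℂ) + I * ((sb * Real.sinh (γ * ξ) : ℝ) : ℂ)) := by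
      rw [hφD ξ, map_div₀, hDconj ξ, map_mul, conj_ofReal, conj_ofReal]
    have hdne := hDne ξ
    have hdcne := hDcne ξ
    rw [hDconj ξ] at hdcne
    rw [hD] at hdne
    simp only at hdne
    rw [hderiv ξ, hnorm, hconjφ, hφD ξ, hD]
    simp only
    have e1 : ((sa:ℂ))^2 = (w:ℂ) + (μ₀:ℂ) := by norm_cast
    have e2 : ((sb:ℂ))^2 = (w:ℂ) - (μ₀:ℂ) := by norm_cast
    have e3 : (sa:ℂ) * (sb:ℂ) = (γ:ℂ) := by norm_cast
    have e4 : (Complex.cosh ((γ:ℂ) * (ξ:ℂ)))^2 - (Complex.sinh ((γ:ℂ) * (ξ:ℂ)))^2 = 1 :=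
      Complex.cosh_sq_sub_sinh_sq _
    have e5 : ((3*(n:ℂ)^2 - (c:ℂ)^2)) * (A:ℂ)^2 = 2 * ((n:ℂ)^2 - (c:ℂ)^2) := by
      have : ((3*(n:ℝ)^2 - c^2)) * A^2 = 2 * ((n:ℝ)^2 - c^2) := by
        field_simp at hA2
        linarith [hA2]
      exact_mod_cast this
    have hncC : ((n:ℂ)^2 - (c:ℂ)^2) ≠ 0 := by
      have : ((n:ℝ)^2 - c^2 : ℝ) ≠ 0 := hnc.ne'
      exact_mod_cast this
    have e6 : ((γ:ℂ))^2 = (w:ℂ)^2 - (μ₀:ℂ)^2 := by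
      have : γ^2 = w^2 - μ₀^2 := by rw [hγ]; exact Real.sq_sqrt hγ2.le
      exact_mod_cast this
    push_cast at hdne hdcne ⊢
    set CC := Complex.cosh ((γ:ℂ) * (ξ:ℂ)) with hCC
    set SS := Complex.sinh ((γ:ℂ) * (ξ:ℂ)) with hSS
    have hI : Complex.I^2 = -1 := Complex.I_sq
    have main : -Complex.I * ((sa:ℂ) * ((γ:ℂ) * SS) - Complex.I * ((sb:ℂ) * ((γ:ℂ) * CC))) *
          ((sa:ℂ) * CC + Complex.I * ((sb:ℂ) * SS)) =
        (w:ℂ) * ((sa:ℂ) * CC - Complex.I * ((sb:ℂ) * SS))^2 -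
          (μ₀:ℂ) * (((sa:ℂ) * CC - Complex.I * ((sb:ℂ) * SS)) *
            ((sa:ℂ) * CC + Complex.I * ((sb:ℂ) * SS))) - 2*(γ:ℂ)^2 := by
      linear_combination (((-1) * Complex.I) * CC * SS * (γ:ℂ) + (1) * CC^2 * (μ₀:ℂ) + (-1) * CC^2 * (w:ℂ)) * e1 +
        ((1) * SS^2 * (μ₀:ℂ) + (1) * SS^2 * (w:ℂ) + ((-1) * Complex.I) * CC * SS * (γ:ℂ)) * e2 +
        ((1) * SS^2 * (γ:ℂ) + ((2) * Complex.I) * CC * SS * (w:ℂ) + (-1) * CC^2 * (γ:ℂ)) * e3 +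
        ((1) * (μ₀:ℂ)^2 + (-1) * (w:ℂ)^2 + (-1) * (γ:ℂ)^2) * e4 +
        e6 +
        (Complex.I*(γ:ℂ)*SS*(sb:ℂ)^2*CC - (sa:ℂ)*(γ:ℂ)*SS^2*(sb:ℂ) + (sa:ℂ)*(γ:ℂ)*(sb:ℂ)*CC^2 -
          SS^2*(sb:ℂ)^2*(μ₀:ℂ) - SS^2*(sb:ℂ)^2*(w:ℂ)) * hI
    have hk : ((3*(n:ℂ)^2 - (c:ℂ)^2)/((n:ℂ)^2 - (c:ℂ)^2)) * ((A:ℂ)*(γ:ℂ))^2 = 2*(γ:ℂ)^2 := by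
      field_simp
      linear_combination (γ:ℂ)^2 * e5
    exact frac_aux _ _ _ _ _ _ _ _ hdne hdcne main hk
  · refine ⟨2*A*γ/sa, by positivity, fun ξ => ?_⟩
    rw [hφD ξ]
    rw [norm_div, norm_mul]
    have hnA : ‖(A:ℂ)‖ = A := by rw [Complex.norm_real]; exact abs_of_pos hAp
    have hnγ : ‖(γ:ℂ)‖ = γ := by rw [Complex.norm_real]; exact abs_of_pos hγp
    rw [hnA, hnγ]
    have hcosh : Real.exp (γ * |ξ|) / 2 ≤ Real.cosh (γ * ξ) := by
      rw [Real.cosh_eq]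
      have h1 := Real.exp_pos (γ * ξ)
      have h2 := Real.exp_pos (-(γ * ξ))
      rcases abs_cases ξ with ⟨h, _⟩ | ⟨h, _⟩
      · rw [h]; linarith
      · rw [h]
        have hne : γ * -ξ = -(γ*ξ) := by ring
        rw [hne]
        linarith
    have hDlow : sa * (Real.exp (γ * |ξ|) / 2) ≤ ‖D ξ‖ := by
      have h1 : |(D ξ).re| ≤ ‖D ξ‖ := Complex.abs_re_le_norm _
      calc sa * (Real.exp (γ * |ξ|) / 2) ≤ sa * Real.cosh (γ * ξ) := by
            exact mul_le_mul_of_nonneg_left hcosh hsap.le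
        _ ≤ |(D ξ).re| := by rw [hDre ξ]; exact le_abs_self _
        _ ≤ ‖D ξ‖ := h1
    have hpos : 0 < sa * (Real.exp (γ * |ξ|) / 2) := by positivity
    calc A * γ / ‖D ξ‖ ≤ A * γ / (sa * (Real.exp (γ * |ξ|) / 2)) := by
          apply div_le_div_of_nonneg_left (by positivity) hpos hDlow
      _ = 2 * A * γ / sa * Real.exp (-γ * |ξ|) := by
          rw [neg_mul, Real.exp_neg]
          field_simp
end

section
/- Suppose (a,b) solves i(a_T + n a_X) = w b + σ(|a|² + 2|b|²)a and i(b_T − n b_X) = w a + σ(2|a|² + |b|²)b. Let |c| < n, and define new variables via the Lorentz transformation ξ = (X − cT)/√(n² − c²), τ = (T − cX)/√(n² − c²), and set a = ((n+c)/(n−c))^{1/4} A(ξ) e^{−iμnτ}, b = ((n−c)/(n+c))^{1/4} B(ξ) e^{−iμnτ}. Then (A, B) satisfy (n−c)(iA' − wB) + μn(1 − cn)A = σ[(n+c)|A|² + 2(n−c)|B|²]A and −(n+c)(iB' + wA) + μn(1 + cn)B = σ[2(n+c)|A|² + (n−c)|B|²]B. -/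
open Complex

lemma keyDeriv (A : ℝ → ℂ) (hA : Differentiable ℝ A) (p q : ℝ) (k d : ℂ) (t : ℝ) :
    HasDerivAt (fun t : ℝ => A (p * t + q) * Complex.exp (k * t + d))
      ((p : ℂ) * deriv A (p * t + q) * Complex.exp (k * t + d) +
        A (p * t + q) * (k * Complex.exp (k * t + d))) t := by
  have hin : HasDerivAt (fun t : ℝ => p * t + q) p t := by
    simpa using ((hasDerivAt_id t).const_mul p).add_const q
  have h1 : HasDerivAt (fun t : ℝ => A (p * t + q)) ((p:ℂ) * deriv A (p*t+q)) t := by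
    have := ((hA (p*t+q)).hasDerivAt).scomp t hin
    simpa [Complex.real_smul, mul_comm, Function.comp_def] using this
  have h2 : HasDerivAt (fun t : ℝ => Complex.exp (k * t + d)) (k * Complex.exp (k*t+d)) t := by
    have hcoe : HasDerivAt (fun t : ℝ => (t:ℂ)) 1 t := by
      simpa using (hasDerivAt_id t).ofReal_comp
    have hlin : HasDerivAt (fun t : ℝ => k * (t:ℂ) + d) k t := by
      simpa using (hcoe.const_mul k).add_const d
    simpa [mul_comm] using hlin.cexp
  exact h1.mul h2

lemma sqinj (x y : ℝ) (hx : 0 ≤ x) (hy : 0 ≤ y) (h : x^2 = y^2) : x = y := by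
  rw [← Real.sqrt_sq hx, h, Real.sqrt_sq hy]

set_option maxHeartbeats 2000000 in
theorem stmt_13 (n : ℕ) (c : ℝ) (hc : |c| < n) (w σ μ : ℝ)
    (A B : ℝ → ℂ) (hA : Differentiable ℝ A) (hB : Differentiable ℝ B)
    (ξ τ : ℝ → ℝ → ℝ)
    (hξ : ∀ X T : ℝ, ξ X T = (X - c * T) / Real.sqrt ((n : ℝ)^2 - c^2))
    (hτ : ∀ X T : ℝ, τ X T = (T - c * X) / Real.sqrt ((n : ℝ)^2 - c^2))
    (a b : ℝ → ℝ → ℂ)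
    (ha : ∀ X T : ℝ, a X T = ((((n : ℝ) + c) / ((n : ℝ) - c)) ^ ((1 : ℝ)/4) : ℝ) *
      A (ξ X T) * Complex.exp (-I * (μ : ℂ) * (n : ℂ) * (τ X T : ℂ)))
    (hb : ∀ X T : ℝ, b X T = ((((n : ℝ) - c) / ((n : ℝ) + c)) ^ ((1 : ℝ)/4) : ℝ) *
      B (ξ X T) * Complex.exp (-I * (μ : ℂ) * (n : ℂ) * (τ X T : ℂ)))
    (heqa : ∀ X T : ℝ,
      I * (deriv (fun T' => a X T') T + (n : ℂ) * deriv (fun X' => a X' T) X) =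
        (w : ℂ) * b X T +
          (σ : ℂ) * ((‖a X T‖^2 + 2 * ‖b X T‖^2 : ℝ) : ℂ) * a X T)
    (heqb : ∀ X T : ℝ,
      I * (deriv (fun T' => b X T') T - (n : ℂ) * deriv (fun X' => b X' T) X) =
        (w : ℂ) * a X T +
          (σ : ℂ) * ((2 * ‖a X T‖^2 + ‖b X T‖^2 : ℝ) : ℂ) * b X T) :
    ∀ s : ℝ,
      (((n : ℝ) - c : ℝ) : ℂ) * (I * deriv A s - (w : ℂ) * B s) +
          ((μ * n * (1 - c * n) : ℝ) : ℂ) * A s =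
        (σ : ℂ) * ((((n : ℝ) + c) * ‖A s‖^2 + 2 * ((n : ℝ) - c) * ‖B s‖^2 : ℝ) : ℂ) * A s ∧
      -((((n : ℝ) + c : ℝ)) : ℂ) * (I * deriv B s + (w : ℂ) * A s) +
          ((μ * n * (1 + c * n) : ℝ) : ℂ) * B s =
        (σ : ℂ) * ((2 * ((n : ℝ) + c) * ‖A s‖^2 + ((n : ℝ) - c) * ‖B s‖^2 : ℝ) : ℂ) * B s := by
  intro s
  have hn : (0:ℝ) < n := (abs_nonneg c).trans_lt hc
  obtain ⟨hcl, hcr⟩ := abs_lt.mp hc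
  have hnc : (0:ℝ) < (n:ℝ) - c := by linarith
  have hpc : (0:ℝ) < (n:ℝ) + c := by linarith
  set r := Real.sqrt ((n : ℝ)^2 - c^2) with hrdef
  have hrr : r^2 = (n:ℝ)^2 - c^2 := Real.sq_sqrt (by nlinarith)
  have hr : 0 < r := Real.sqrt_pos.mpr (by nlinarith)
  set α := (((n : ℝ) + c) / ((n : ℝ) - c)) ^ ((1 : ℝ)/4) with hαd
  set β := (((n : ℝ) - c) / ((n : ℝ) + c)) ^ ((1 : ℝ)/4) with hβd
  have hα : 0 < α := Real.rpow_pos_of_pos (div_pos hpc hnc) _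
  have hβ : 0 < β := Real.rpow_pos_of_pos (div_pos hnc hpc) _
  have hα4 : α^4 = ((n : ℝ) + c) / ((n : ℝ) - c) := by
    rw [hαd, ← Real.rpow_natCast (_ ^ ((1:ℝ)/4)) 4, ← Real.rpow_mul (le_of_lt (div_pos hpc hnc))]
    norm_num
  have hβ4 : β^4 = ((n : ℝ) - c) / ((n : ℝ) + c) := by
    rw [hβd, ← Real.rpow_natCast (_ ^ ((1:ℝ)/4)) 4, ← Real.rpow_mul (le_of_lt (div_pos hnc hpc))]
    norm_num
  have h1 : r * α^2 = (n:ℝ) + c := by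
    apply sqinj _ _ (by positivity) hpc.le
    have : (r * α^2)^2 = r^2 * α^4 := by ring
    rw [this, hrr, hα4]
    field_simp
    ring
  have h2 : r * β^2 = (n:ℝ) - c := by
    apply sqinj _ _ (by positivity) hnc.le
    have : (r * β^2)^2 = r^2 * β^4 := by ring
    rw [this, hrr, hβ4]
    field_simp
    ring
  have hαβ : α * β = 1 := by
    have h44 : ((α*β)^2)^2 = 1 := by
      rw [show ((α*β)^2)^2 = α^4*β^4 from by ring, hα4, hβ4]
      field_simp
    have h22 : (α*β)^2 = 1 :=
      sqinj _ _ (by positivity) zero_le_one (by rw [one_pow]; exact h44)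
    exact sqinj _ _ (by positivity) zero_le_one (by rw [one_pow]; exact h22)
  have h3 : r * β = α * ((n:ℝ) - c) := by linear_combination α*h2 - r*β*hαβ
  have h4 : r * α = β * ((n:ℝ) + c) := by linear_combination β*h1 - r*α*hαβ
  have h1c : (r:ℂ) * (α:ℂ)^2 = (n:ℂ) + (c:ℂ) := by exact_mod_cast congrArg Complex.ofReal h1
  have h2c : (r:ℂ) * (β:ℂ)^2 = (n:ℂ) - (c:ℂ) := by exact_mod_cast congrArg Complex.ofReal h2
  have h3c : (r:ℂ) * (β:ℂ) = (α:ℂ) * ((n:ℂ) - (c:ℂ)) := by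
    exact_mod_cast congrArg Complex.ofReal h3
  have h4c : (r:ℂ) * (α:ℂ) = (β:ℂ) * ((n:ℂ) + (c:ℂ)) := by
    exact_mod_cast congrArg Complex.ofReal h4
  have hrne : (r:ℂ) ≠ 0 := by exact_mod_cast hr.ne'
  set X := r * s with hX
  set E := Complex.exp (I * (μ:ℂ) * (n:ℂ) * (c:ℂ) * (s:ℂ)) with hE
  have hEne : E ≠ 0 := Complex.exp_ne_zero _
  -- value of a at (X,0)
  have haX0 : a X 0 = (α:ℂ) * A s * E := by
    rw [ha X 0, hξ X 0, hτ X 0]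
    have e1 : (X - c * 0)/r = s := by rw [hX]; field_simp; ring
    have e2 : -I * (μ:ℂ) * (n:ℂ) * ((((0:ℝ) - c * X)/r : ℝ) : ℂ) =
        I * (μ:ℂ) * (n:ℂ) * (c:ℂ) * (s:ℂ) := by
      rw [hX]; push_cast; field_simp; ring
    rw [e1, e2]
  have hbX0 : b X 0 = (β:ℂ) * B s * E := by
    rw [hb X 0, hξ X 0, hτ X 0]
    have e1 : (X - c * 0)/r = s := by rw [hX]; field_simp; ring
    have e2 : -I * (μ:ℂ) * (n:ℂ) * ((((0:ℝ) - c * X)/r : ℝ) : ℂ) =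
        I * (μ:ℂ) * (n:ℂ) * (c:ℂ) * (s:ℂ) := by
      rw [hX]; push_cast; field_simp; ring
    rw [e1, e2]
  have hnormE : ‖E‖ = 1 := by
    have : I * (μ:ℂ) * (n:ℂ) * (c:ℂ) * (s:ℂ) = ((μ * n * c * s : ℝ) : ℂ) * I := by
      push_cast; ring
    rw [hE, this, Complex.norm_exp_ofReal_mul_I]
  have hnA : ‖a X 0‖^2 = α^2 * ‖A s‖^2 := by
    rw [haX0, norm_mul, norm_mul, hnormE, Complex.norm_real, Real.norm_eq_abs,
      abs_of_pos hα]
    ring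
  have hnB : ‖b X 0‖^2 = β^2 * ‖B s‖^2 := by
    rw [hbX0, norm_mul, norm_mul, hnormE, Complex.norm_real, Real.norm_eq_abs,
      abs_of_pos hβ]
    ring
  -- derivatives of a
  have hfaT : (fun t => a X t) = fun t : ℝ => ((α:ℝ):ℂ) *
      (A ((-c/r) * t + s) * Complex.exp ((-I*(μ:ℂ)*(n:ℂ)/(r:ℂ)) * t +
        I * (μ:ℂ) * (n:ℂ) * (c:ℂ) * (s:ℂ))) := by
    funext t
    rw [ha X t, hξ X t, hτ X t]
    have e1 : (X - c * t)/r = (-c/r) * t + s := by rw [hX]; field_simp; ring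
    have e2 : -I * (μ:ℂ) * (n:ℂ) * (((t - c * X)/r : ℝ) : ℂ) =
        (-I*(μ:ℂ)*(n:ℂ)/(r:ℂ)) * t + I * (μ:ℂ) * (n:ℂ) * (c:ℂ) * (s:ℂ) := by
      rw [hX]; push_cast; field_simp; ring
    rw [e1, e2]; ring
  have hfaX : (fun x => a x 0) = fun x : ℝ => ((α:ℝ):ℂ) *
      (A ((1/r) * x + 0) * Complex.exp ((I*(μ:ℂ)*(n:ℂ)*(c:ℂ)/(r:ℂ)) * x + 0)) := by
    funext x
    rw [ha x 0, hξ x 0, hτ x 0]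
    have e1 : (x - c * 0)/r = (1/r) * x + 0 := by field_simp; ring
    have e2 : -I * (μ:ℂ) * (n:ℂ) * ((((0:ℝ) - c * x)/r : ℝ) : ℂ) =
        (I*(μ:ℂ)*(n:ℂ)*(c:ℂ)/(r:ℂ)) * x + 0 := by
      push_cast; field_simp; ring
    rw [e1, e2]; ring
  have HdTa := (keyDeriv A hA (-c/r) s (-I*(μ:ℂ)*(n:ℂ)/(r:ℂ))
      (I * (μ:ℂ) * (n:ℂ) * (c:ℂ) * (s:ℂ)) 0).const_mul ((α:ℝ):ℂ)
  rw [← hfaT] at HdTa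
  have hdTa : deriv (fun t => a X t) 0 = (α:ℂ) *
      (((-c/r : ℝ):ℂ) * deriv A s * E + A s * ((-I*(μ:ℂ)*(n:ℂ)/(r:ℂ)) * E)) := by
    rw [HdTa.deriv]
    norm_num
    left; rw [hE]
  have HdXa := (keyDeriv A hA (1/r) 0 (I*(μ:ℂ)*(n:ℂ)*(c:ℂ)/(r:ℂ)) 0 X).const_mul ((α:ℝ):ℂ)
  rw [← hfaX] at HdXa
  have hdXa : deriv (fun x => a x 0) X = (α:ℂ) *
      (((1/r : ℝ):ℂ) * deriv A s * E + A s * ((I*(μ:ℂ)*(n:ℂ)*(c:ℂ)/(r:ℂ)) * E)) := by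
    rw [HdXa.deriv]
    have e1 : (1/r) * X + 0 = s := by rw [hX]; field_simp; ring
    have e2 : (I*(μ:ℂ)*(n:ℂ)*(c:ℂ)/(r:ℂ)) * (X:ℂ) + 0 =
        I * (μ:ℂ) * (n:ℂ) * (c:ℂ) * (s:ℂ) := by
      rw [hX]; push_cast; field_simp; ring
    rw [e1, e2]
  -- derivatives of b
  have hfbT : (fun t => b X t) = fun t : ℝ => ((β:ℝ):ℂ) *
      (B ((-c/r) * t + s) * Complex.exp ((-I*(μ:ℂ)*(n:ℂ)/(r:ℂ)) * t +
        I * (μ:ℂ) * (n:ℂ) * (c:ℂ) * (s:ℂ))) := by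
    funext t
    rw [hb X t, hξ X t, hτ X t]
    have e1 : (X - c * t)/r = (-c/r) * t + s := by rw [hX]; field_simp; ring
    have e2 : -I * (μ:ℂ) * (n:ℂ) * (((t - c * X)/r : ℝ) : ℂ) =
        (-I*(μ:ℂ)*(n:ℂ)/(r:ℂ)) * t + I * (μ:ℂ) * (n:ℂ) * (c:ℂ) * (s:ℂ) := by
      rw [hX]; push_cast; field_simp; ring
    rw [e1, e2]; ring
  have hfbX : (fun x => b x 0) = fun x : ℝ => ((β:ℝ):ℂ) *
      (B ((1/r) * x + 0) * Complex.exp ((I*(μ:ℂ)*(n:ℂ)*(c:ℂ)/(r:ℂ)) * x + 0)) := by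
    funext x
    rw [hb x 0, hξ x 0, hτ x 0]
    have e1 : (x - c * 0)/r = (1/r) * x + 0 := by field_simp; ring
    have e2 : -I * (μ:ℂ) * (n:ℂ) * ((((0:ℝ) - c * x)/r : ℝ) : ℂ) =
        (I*(μ:ℂ)*(n:ℂ)*(c:ℂ)/(r:ℂ)) * x + 0 := by
      push_cast; field_simp; ring
    rw [e1, e2]; ring
  have HdTb := (keyDeriv B hB (-c/r) s (-I*(μ:ℂ)*(n:ℂ)/(r:ℂ))
      (I * (μ:ℂ) * (n:ℂ) * (c:ℂ) * (s:ℂ)) 0).const_mul ((β:ℝ):ℂ)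
  rw [← hfbT] at HdTb
  have hdTb : deriv (fun t => b X t) 0 = (β:ℂ) *
      (((-c/r : ℝ):ℂ) * deriv B s * E + B s * ((-I*(μ:ℂ)*(n:ℂ)/(r:ℂ)) * E)) := by
    rw [HdTb.deriv]
    norm_num
    left; rw [hE]
  have HdXb := (keyDeriv B hB (1/r) 0 (I*(μ:ℂ)*(n:ℂ)*(c:ℂ)/(r:ℂ)) 0 X).const_mul ((β:ℝ):ℂ)
  rw [← hfbX] at HdXb
  have hdXb : deriv (fun x => b x 0) X = (β:ℂ) *
      (((1/r : ℝ):ℂ) * deriv B s * E + B s * ((I*(μ:ℂ)*(n:ℂ)*(c:ℂ)/(r:ℂ)) * E)) := by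
    rw [HdXb.deriv]
    have e1 : (1/r) * X + 0 = s := by rw [hX]; field_simp; ring
    have e2 : (I*(μ:ℂ)*(n:ℂ)*(c:ℂ)/(r:ℂ)) * (X:ℂ) + 0 =
        I * (μ:ℂ) * (n:ℂ) * (c:ℂ) * (s:ℂ) := by
      rw [hX]; push_cast; field_simp; ring
    rw [e1, e2]
  -- plug into the PDEs
  have hPa := heqa X 0
  rw [hnA, hnB, haX0, hbX0, hdTa, hdXa] at hPa
  push_cast at hPa
  field_simp at hPa
  have hPb := heqb X 0
  rw [hnA, hnB, haX0, hbX0, hdTb, hdXb] at hPb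
  push_cast at hPb
  field_simp at hPb
  have P2a : (α:ℂ) * (I*((n:ℂ)-(c:ℂ))*deriv A s +
      ((μ:ℂ)*(n:ℂ)*(1-(c:ℂ)*(n:ℂ)))*A s) =
      (r:ℂ)*(w:ℂ)*(β:ℂ)*B s +
      (r:ℂ)*(σ:ℂ)*((α:ℂ)^2*(‖A s‖:ℂ)^2 + 2*(β:ℂ)^2*(‖B s‖:ℂ)^2)*(α:ℂ)*A s := by
    refine mul_right_cancel₀ hEne ?_
    refine mul_left_cancel₀ (pow_ne_zero 2 hrne) ?_
    linear_combination (r:ℂ)^2*E*hPa + (r:ℂ)^2*(α:ℂ)*(n:ℂ)*(μ:ℂ)*A s*E*(1-(c:ℂ)*(n:ℂ))*Complex.I_sq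
  have P2b : (β:ℂ) * (-I*((n:ℂ)+(c:ℂ))*deriv B s +
      ((μ:ℂ)*(n:ℂ)*(1+(c:ℂ)*(n:ℂ)))*B s) =
      (r:ℂ)*(w:ℂ)*(α:ℂ)*A s +
      (r:ℂ)*(σ:ℂ)*(2*(α:ℂ)^2*(‖A s‖:ℂ)^2 + (β:ℂ)^2*(‖B s‖:ℂ)^2)*(β:ℂ)*B s := by
    refine mul_right_cancel₀ hEne ?_
    refine mul_left_cancel₀ (pow_ne_zero 2 hrne) ?_
    linear_combination (r:ℂ)^2*E*hPb + (r:ℂ)^2*(β:ℂ)*(n:ℂ)*(μ:ℂ)*B s*E*(1+(c:ℂ)*(n:ℂ))*Complex.I_sq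
  have hαne : ((α:ℝ):ℂ) ≠ 0 := by exact_mod_cast hα.ne'
  have hβne : ((β:ℝ):ℂ) ≠ 0 := by exact_mod_cast hβ.ne'
  constructor
  · refine mul_left_cancel₀ hαne ?_
    push_cast
    linear_combination P2a + (w:ℂ)*B s*h3c + (σ:ℂ)*(‖A s‖:ℂ)^2*A s*(α:ℂ)*h1c +
      2*(σ:ℂ)*(‖B s‖:ℂ)^2*A s*(α:ℂ)*h2c
  · refine mul_left_cancel₀ hβne ?_
    push_cast
    linear_combination P2b + (w:ℂ)*A s*h4c + 2*(σ:ℂ)*(‖A s‖:ℂ)^2*B s*(β:ℂ)*h1c +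
      (σ:ℂ)*(‖B s‖:ℂ)^2*B s*(β:ℂ)*h2c
end
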